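/- If a propagator 𝒰(t) on L² satisfies the growth bound ‖𝒰(t)‖_{L²→L²} ≲ ⟨t⟩^{m₀} and commutes appropriately with the generators, then whenever f(t) = 𝒰(t)g with g smooth and polynomially weighted, the quantity Φ_{j,γ}(t) = Σ_{j'≤j, |γ'|≤|γ|} ‖⟨x⟩^{j'}∂^{γ'}_x 𝒰(t)g‖_{L²} satisfies a Gronwall-type bound Φ_{j,|γ|}(t) ≲ ⟨t⟩^K Σ_{|β| ≤ |γ|+j} ‖⟨x⟩^j ∂_x^β g‖_{L²} for some K depending on j, |γ|, m₀, provided d/dt ‖⟨x⟩^{j'}∂^{γ'}_x 𝒰(t)g‖_{L²}² is bounded by commutator terms controlled by lower-order weighted norms times ⟨t⟩². -/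

import Mathlib

/-- abstract polynomial weighted-norm propagation (Gronwall-type) lemma.
Here `N j k t` stands for the weighted norm `‖⟨x⟩^j ∂_x^k 𝒰(t)g‖_{L²}` of the
propagated state and `B` for `Σ_{|β|≤|γ|+j}‖⟨x⟩^j ∂_x^β g‖_{L²}`. Given the `L²`
growth bound `‖𝒰(t)‖ ≲ ⟨t⟩^{m₀}` (encoded as the unweighted bound `hgrow`) and the
commutator differential inequality in which each commutation lowers the weight by one,
raises the derivative count by one, and costs a factor `⟨t⟩²`, every weighted norm
grows at most polynomially: `N j k t ≲ ⟨t⟩^K B` for some `K = K(j,k,m₀)`. -/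
theorem weighted_norm_polynomial_growth
    (N : ℕ → ℕ → ℝ → ℝ) (B C₀ C₁ : ℝ) (m₀ : ℕ)
    (hB : 0 ≤ B) (hC₀ : 0 ≤ C₀) (hC₁ : 0 ≤ C₁)
    (hNpos : ∀ j k t, 0 ≤ N j k t)
    (hNdiff : ∀ j k, Differentiable ℝ (N j k))
    (hinit : ∀ j k, N j k 0 ≤ B)
    -- `L²` growth bound for the unweighted norms: `‖𝒰(t)g‖_{H^k} ≲ ⟨t⟩^{m₀} B`
    (hgrow : ∀ k t, N 0 k t ≤ C₀ * (1 + t ^ 2) ^ ((m₀ : ℝ) / 2) * B)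
    -- commutator differential inequality
    (hderiv : ∀ j k t, 1 ≤ j →
      |deriv (fun τ => (N j k τ) ^ 2) t|
        ≤ C₁ * (1 + t ^ 2) * N j k t * (N (j - 1) (k + 1) t + B)) :
    ∀ j k : ℕ, ∃ (K : ℕ) (C' : ℝ), 0 ≤ C' ∧
      ∀ t : ℝ, 0 ≤ t → N j k t ≤ C' * (1 + t ^ 2) ^ ((K : ℝ) / 2) * B := by
  intro j
  induction j with
  | zero => intro k; exact ⟨m₀, C₀, hC₀, fun t _ => hgrow k t⟩
  | succ j ih =>
    intro k
    obtain ⟨K, C', hC', hIH⟩ := ih (k + 1)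
    refine ⟨K + 3, 1 + C₁ / 2 * (C' + 1), by positivity, ?_⟩
    intro t ht
    -- pointwise derivative bound
    have hd : ∀ τ : ℝ, |deriv (N (j+1) k) τ|
        ≤ C₁ / 2 * (1 + τ ^ 2) * (N j (k + 1) τ + B) := by
      intro τ
      have hRHS : (0:ℝ) ≤ C₁ / 2 * (1 + τ ^ 2) * (N j (k+1) τ + B) := by
        have h1 := hNpos j (k+1) τ
        positivity
      have h2 : deriv (fun s => N (j+1) k s ^ 2) τ
          = 2 * N (j+1) k τ * deriv (N (j+1) k) τ := by
        have := ((hNdiff (j+1) k τ).hasDerivAt.pow 2).deriv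
        simp at this
        exact this
      have hineq := hderiv (j+1) k τ (Nat.le_add_left 1 j)
      rw [h2] at hineq
      simp only [Nat.add_sub_cancel] at hineq
      rcases eq_or_lt_of_le (hNpos (j+1) k τ) with h0 | h0
      · have hz : deriv (N (j+1) k) τ = 0 := by
          have hmin : IsLocalMin (N (j+1) k) τ := by
            apply IsMinOn.isLocalMin (s := Set.univ)
            · intro x _; rw [← h0]; exact hNpos _ _ _
            · exact Filter.univ_mem
          exact hmin.deriv_eq_zero
        rw [hz]; simpa using hRHS
      · have habs : |2 * N (j+1) k τ * deriv (N (j+1) k) τ|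
            = 2 * N (j+1) k τ * |deriv (N (j+1) k) τ| := by
          rw [abs_mul, abs_of_nonneg (by linarith)]
        rw [habs] at hineq
        nlinarith [hineq, h0]
    -- uniform derivative bound on [0, t]
    set P : ℝ := 1 + t ^ 2 with hP
    have hP1 : (1:ℝ) ≤ P := by nlinarith
    have hP0 : (0:ℝ) < P := by linarith
    set G : ℝ := C₁ / 2 * P * (C' * P ^ ((K : ℝ) / 2) * B + B) with hG
    have hGd : ∀ τ ∈ Set.Icc (0:ℝ) t, ‖deriv (N (j+1) k) τ‖ ≤ G := by
      intro τ hτ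
      obtain ⟨hτ0, hτt⟩ := hτ
      have h1 : 1 + τ ^ 2 ≤ P := by rw [hP]; nlinarith
      have h2 : N j (k+1) τ ≤ C' * P ^ ((K : ℝ) / 2) * B := by
        refine (hIH τ hτ0).trans ?_
        have : (1 + τ ^ 2) ^ ((K : ℝ) / 2) ≤ P ^ ((K : ℝ) / 2) := by
          apply Real.rpow_le_rpow (by positivity) h1 (by positivity)
        exact mul_le_mul_of_nonneg_right (mul_le_mul_of_nonneg_left this hC') hB
      calc ‖deriv (N (j+1) k) τ‖
          ≤ C₁ / 2 * (1 + τ ^ 2) * (N j (k+1) τ + B) := hd τ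
        _ ≤ G := by
            rw [hG]
            have hn := hNpos j (k+1) τ
            have hq : (0:ℝ) ≤ C' * P ^ ((K : ℝ) / 2) * B := by positivity
            apply mul_le_mul
            · exact mul_le_mul_of_nonneg_left h1 (by positivity)
            · linarith
            · linarith
            · positivity
    -- mean value inequality on [0, t]
    have hmvt : ‖N (j+1) k t - N (j+1) k 0‖ ≤ G * ‖t - 0‖ :=
      Convex.norm_image_sub_le_of_norm_deriv_le
        (fun x _ => (hNdiff (j+1) k).differentiableAt) hGd (convex_Icc 0 t)
        (Set.left_mem_Icc.2 ht) (Set.right_mem_Icc.2 ht)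
    have hNt : N (j+1) k t ≤ B + G * t := by
      have h := hmvt
      rw [Real.norm_eq_abs, Real.norm_eq_abs, sub_zero, abs_of_nonneg ht] at h
      have h2 := (abs_le.mp h).2
      have := hinit (j+1) k
      linarith
    -- rpow arithmetic
    set Q : ℝ := P ^ (((K+3 : ℕ) : ℝ) / 2) with hQ
    have ht' : t ≤ P ^ ((1:ℝ)/2) := by
      have h1 : t ≤ Real.sqrt P := by
        rw [← Real.sqrt_sq ht]
        exact Real.sqrt_le_sqrt (by nlinarith [hP1])
      rwa [Real.sqrt_eq_rpow] at h1
    have hfac : P * P ^ ((K : ℝ) / 2) * P ^ ((1:ℝ)/2) = Q := by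
      rw [hQ]
      rw [show P * P ^ ((K : ℝ) / 2) * P ^ ((1:ℝ)/2)
          = P ^ (1:ℝ) * P ^ ((K : ℝ) / 2) * P ^ ((1:ℝ)/2) by rw [Real.rpow_one]]
      rw [← Real.rpow_add hP0, ← Real.rpow_add hP0]
      congr 1
      push_cast
      ring
    have h1 : P * P ^ ((K : ℝ) / 2) * t ≤ Q := by
      calc P * P ^ ((K : ℝ) / 2) * t ≤ P * P ^ ((K : ℝ) / 2) * P ^ ((1:ℝ)/2) := by
            have : (0:ℝ) ≤ P * P ^ ((K : ℝ) / 2) := by positivity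
            exact mul_le_mul_of_nonneg_left ht' this
        _ = Q := hfac
    have h2 : P * t ≤ Q := by
      have hPt : P * t ≤ P ^ ((3:ℝ)/2) := by
        calc P * t ≤ P * P ^ ((1:ℝ)/2) := mul_le_mul_of_nonneg_left ht' hP0.le
          _ = P ^ ((3:ℝ)/2) := by
              rw [show P * P ^ ((1:ℝ)/2) = P ^ (1:ℝ) * P ^ ((1:ℝ)/2) by rw [Real.rpow_one],
                ← Real.rpow_add hP0]
              norm_num
      refine hPt.trans ?_
      rw [hQ]
      apply Real.rpow_le_rpow_of_exponent_le hP1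
      push_cast
      linarith [Nat.cast_nonneg (α := ℝ) K]
    have h3 : (1:ℝ) ≤ Q := by
      rw [hQ]; exact Real.one_le_rpow hP1 (by positivity)
    -- finish
    have hGt : G * t ≤ C₁ / 2 * (C' + 1) * Q * B := by
      rw [hG]
      have e : C₁ / 2 * P * (C' * P ^ ((K : ℝ) / 2) * B + B) * t
          = C₁ / 2 * (C' * (P * P ^ ((K : ℝ) / 2) * t) * B + B * (P * t)) := by ring
      rw [e]
      have b1 : C' * (P * P ^ ((K : ℝ) / 2) * t) * B ≤ C' * Q * B := by
        apply mul_le_mul_of_nonneg_right (mul_le_mul_of_nonneg_left h1 hC') hB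
      have b2 : B * (P * t) ≤ B * Q := mul_le_mul_of_nonneg_left h2 hB
      calc C₁ / 2 * (C' * (P * P ^ ((K : ℝ) / 2) * t) * B + B * (P * t))
          ≤ C₁ / 2 * (C' * Q * B + B * Q) :=
            mul_le_mul_of_nonneg_left (add_le_add b1 b2) (by positivity)
        _ = C₁ / 2 * (C' + 1) * Q * B := by ring
    have hBQ : B ≤ Q * B := le_mul_of_one_le_left hB h3
    calc N (j+1) k t ≤ B + G * t := hNt
      _ ≤ Q * B + C₁ / 2 * (C' + 1) * Q * B := by linarith
      _ = (1 + C₁ / 2 * (C' + 1)) * Q * B := by ring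
      _ = (1 + C₁ / 2 * (C' + 1)) * (1 + t ^ 2) ^ (((K+3 : ℕ) : ℝ) / 2) * B := by
          rw [hQ, hP]
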